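/- Let f = x^4 + y^4 − (x − y)^2(x + y). For every pair of nonzero formal Laurent series x, y ∈ ℝ((t)) with f(x, y) = 0, the vector (−val(x), −val(y)) ∈ ℤ^2 is a nonnegative integer multiple of one of the vectors (0,−1), (−1,0), or (−1,−1). -/

import Mathlib

open HahnSeries
noncomputable section

lemma lc_mul {x y : LaurentSeries ℝ} (hx : x ≠ 0) (hy : y ≠ 0) :
    (x*y).leadingCoeff = x.leadingCoeff * y.leadingCoeff := by
  rw [leadingCoeff_eq, order_mul hx hy, coeff_mul_order_add_order]

lemma lc_pow {x : LaurentSeries ℝ} (hx : x ≠ 0) (n : ℕ) :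
    (x^n).leadingCoeff = x.leadingCoeff ^ n := by
  induction n with
  | zero => simp [leadingCoeff_one]
  | succ k ih => rw [pow_succ, lc_mul (pow_ne_zero k hx) hx, ih, pow_succ]

lemma ord_pow {x : LaurentSeries ℝ} (n : ℕ) : (x^n).order = (n:ℤ) * x.order := by
  simp [order_pow, nsmul_eq_mul]

lemma coeff_at_order {z : LaurentSeries ℝ} {d : ℤ} (hd : z.order = d) :
    z.coeff d = z.leadingCoeff := by rw [← hd, ← leadingCoeff_eq]

lemma coeff_lt {z : LaurentSeries ℝ} {d : ℤ} (hd : d < z.order) : z.coeff d = 0 :=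
  coeff_eq_zero_of_lt_order hd

lemma aux (x y : LaurentSeries ℝ) (hx : x ≠ 0) (hy : y ≠ 0)
    (hf : x^4 + y^4 - x^3 + x^2*y + x*y^2 - y^3 = 0)
    (hab : x.order ≤ y.order) : 0 ≤ x.order ∧ (x.order = 0 ∨ x.order = y.order) := by
  set a := x.order with ha
  set b := y.order with hb
  set α := x.leadingCoeff with hα
  set β := y.leadingCoeff with hβ
  have hα0 : α ≠ 0 := leadingCoeff_ne_zero.mpr hx
  have hβ0 : β ≠ 0 := leadingCoeff_ne_zero.mpr hy
  have o4x : (x^4).order = 4*a := by rw [ord_pow]; norm_num; rfl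
  have o4y : (y^4).order = 4*b := by rw [ord_pow]; norm_num; rfl
  have o3x : (x^3).order = 3*a := by rw [ord_pow]; norm_num; rfl
  have o3y : (y^3).order = 3*b := by rw [ord_pow]; norm_num; rfl
  have oxxy : (x^2*y).order = 2*a + b := by
    rw [order_mul (pow_ne_zero 2 hx) hy, ord_pow]; norm_num; rfl
  have oxyy : (x*y^2).order = a + 2*b := by
    rw [order_mul hx (pow_ne_zero 2 hy), ord_pow]; norm_num; rfl
  have hc : ∀ d : ℤ, (x^4).coeff d + (y^4).coeff d - (x^3).coeff d + (x^2*y).coeff d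
      + (x*y^2).coeff d - (y^3).coeff d = 0 := by
    intro d
    have := congrArg (fun z : LaurentSeries ℝ => z.coeff d) hf
    simpa using this
  have h0a : 0 ≤ a := by
    by_contra hneg
    push_neg at hneg
    have e1 := hc (4*a)
    rw [coeff_at_order o4x, lc_pow hx] at e1
    rw [coeff_lt (show 4*a < (x^3).order by rw [o3x]; linarith)] at e1
    rw [coeff_lt (show 4*a < (x^2*y).order by rw [oxxy]; linarith)] at e1
    rw [coeff_lt (show 4*a < (x*y^2).order by rw [oxyy]; linarith)] at e1
    rw [coeff_lt (show 4*a < (y^3).order by rw [o3y]; linarith)] at e1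
    have hq : 0 ≤ (y^4).coeff (4*a) := by
      rcases lt_or_eq_of_le hab with hlt | heq
      · rw [coeff_lt (show 4*a < (y^4).order by rw [o4y]; linarith)]
      · rw [coeff_at_order (by rw [o4y, heq]), lc_pow hy]
        positivity
    have hp : 0 < α^4 := by positivity
    linarith
  refine ⟨h0a, ?_⟩
  by_contra hcon
  push_neg at hcon
  obtain ⟨h1, h2⟩ := hcon
  have hpos : 0 < a := lt_of_le_of_ne h0a (Ne.symm h1)
  have hlt : a < b := lt_of_le_of_ne hab h2
  have e1 := hc (3*a)
  rw [coeff_at_order o3x, lc_pow hx] at e1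
  rw [coeff_lt (show 3*a < (x^4).order by rw [o4x]; linarith)] at e1
  rw [coeff_lt (show 3*a < (y^4).order by rw [o4y]; linarith)] at e1
  rw [coeff_lt (show 3*a < (x^2*y).order by rw [oxxy]; linarith)] at e1
  rw [coeff_lt (show 3*a < (x*y^2).order by rw [oxyy]; linarith)] at e1
  rw [coeff_lt (show 3*a < (y^3).order by rw [o3y]; linarith)] at e1
  have : α^3 = 0 := by linarith
  exact hα0 (by simpa using pow_eq_zero_iff (n := 3) (by norm_num) |>.mp this)

/-- Every real Laurent-series zero of `f = x⁴ + y⁴ − (x − y)²(x + y)` with nonzero coordinates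
has negated valuation vector a nonnegative multiple of `(0,−1)`, `(−1,0)`, or `(−1,−1)`. -/
theorem quartic_real_trop_rays (x y : LaurentSeries ℝ) (hx : x ≠ 0) (hy : y ≠ 0)
    (h : x ^ 4 + y ^ 4 - (x - y) ^ 2 * (x + y) = 0) :
    ∃ c : ℕ, (x.order = 0 ∧ y.order = (c : ℤ)) ∨
      (x.order = (c : ℤ) ∧ y.order = 0) ∨
      (x.order = (c : ℤ) ∧ y.order = (c : ℤ)) := by
  have hf : x^4 + y^4 - x^3 + x^2*y + x*y^2 - y^3 = 0 := by linear_combination h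
  rcases le_total x.order y.order with hab | hba
  · obtain ⟨h0a, hcase⟩ := aux x y hx hy hf hab
    rcases hcase with h0 | heq
    · have h0b : 0 ≤ y.order := le_trans h0a hab
      exact ⟨y.order.toNat, Or.inl ⟨h0, (Int.toNat_of_nonneg h0b).symm⟩⟩
    · exact ⟨x.order.toNat, Or.inr (Or.inr ⟨(Int.toNat_of_nonneg h0a).symm,
        heq ▸ (Int.toNat_of_nonneg h0a).symm⟩)⟩
  · have hf' : y^4 + x^4 - y^3 + y^2*x + y*x^2 - x^3 = 0 := by linear_combination h
    obtain ⟨h0b, hcase⟩ := aux y x hy hx hf' hba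
    rcases hcase with h0 | heq
    · have h0a : 0 ≤ x.order := le_trans h0b hba
      exact ⟨x.order.toNat, Or.inr (Or.inl ⟨(Int.toNat_of_nonneg h0a).symm, h0⟩)⟩
    · exact ⟨y.order.toNat, Or.inr (Or.inr ⟨heq ▸ (Int.toNat_of_nonneg h0b).symm,
        (Int.toNat_of_nonneg h0b).symm⟩)⟩
end
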